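/- arXiv:1312.2770 — 2 statements merged into one kernel-verified Lean document; each statement's English description precedes it below -/
import Mathlib

section
/- Let E be a Banach lattice. If the lattice operations of E* are weak* sequentially continuous, then every almost limited solid subset of E is limited. -/
open Filter Topology Metric Pointwise

/-- The value `|f| x` of the modulus of a continuous linear functional at a positive
element `x`, given by the Riesz–Kantorovich formula `|f| x = sup { f u : |u| ≤ x }`. -/
noncomputable def absFunctional {E : Type*} [NormedAddCommGroup E] [Lattice E] [HasSolidNorm E] [IsOrderedAddMonoid E] [NormedSpace ℝ E]
    (f : E →L[ℝ] ℝ) (x : E) : ℝ :=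
  sSup ((fun u => f u) '' {u : E | |u| ≤ x})

/-- Two functionals `f, g` on a Banach lattice are (lattice) disjoint: `|f| ⊓ |g| = 0`,
expressed via the Riesz–Kantorovich formula for the infimum of the positive functionals
`|f|` and `|g|`. -/
def DualDisjoint {E : Type*} [NormedAddCommGroup E] [Lattice E] [HasSolidNorm E] [IsOrderedAddMonoid E] [NormedSpace ℝ E]
    (f g : E →L[ℝ] ℝ) : Prop :=
  ∀ x : E, 0 ≤ x → ∀ ε : ℝ, 0 < ε →
    ∃ y : E, 0 ≤ y ∧ y ≤ x ∧ absFunctional f y + absFunctional g (x - y) < ε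

/-- A sequence of functionals is disjoint if any two distinct terms are lattice disjoint. -/
def DualDisjointSeq {E : Type*} [NormedAddCommGroup E] [Lattice E] [HasSolidNorm E] [IsOrderedAddMonoid E] [NormedSpace ℝ E]
    (f : ℕ → E →L[ℝ] ℝ) : Prop :=
  ∀ m k, m ≠ k → DualDisjoint (f m) (f k)

/-- A sequence of functionals is weak* null if it converges to `0` pointwise. -/
def WeakStarNull {E : Type*} [NormedAddCommGroup E] [NormedSpace ℝ E]
    (f : ℕ → E →L[ℝ] ℝ) : Prop :=
  ∀ x : E, Tendsto (fun n => f n x) atTop (𝓝 (0 : ℝ))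

/-- The sequence `(|f n|)` of moduli is weak* null (it suffices to test on positive
elements since `|f n|` is additive and every element is a difference of positives). -/
def AbsWeakStarNull {E : Type*} [NormedAddCommGroup E] [Lattice E] [HasSolidNorm E] [IsOrderedAddMonoid E] [NormedSpace ℝ E]
    (f : ℕ → E →L[ℝ] ℝ) : Prop :=
  ∀ x : E, 0 ≤ x → Tendsto (fun n => absFunctional (f n) x) atTop (𝓝 (0 : ℝ))

/-- A functional is positive if it is nonnegative on the positive cone. -/
def PositiveFunctional {E : Type*} [NormedAddCommGroup E] [Lattice E] [HasSolidNorm E] [IsOrderedAddMonoid E] [NormedSpace ℝ E]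
    (f : E →L[ℝ] ℝ) : Prop :=
  ∀ x : E, 0 ≤ x → 0 ≤ f x

/-- A norm bounded set `A` is almost limited if every disjoint weak* null sequence of
functionals converges to `0` uniformly on `A`. -/
def AlmostLimitedSet {E : Type*} [NormedAddCommGroup E] [Lattice E] [HasSolidNorm E] [IsOrderedAddMonoid E] [NormedSpace ℝ E]
    (A : Set E) : Prop :=
  Bornology.IsBounded A ∧
    ∀ f : ℕ → E →L[ℝ] ℝ, DualDisjointSeq f → WeakStarNull f →
      TendstoUniformlyOn (fun n x => f n x) (fun _ => (0 : ℝ)) atTop A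

/-- A norm bounded set `A` in a Banach space is limited if every weak* null sequence of
functionals converges to `0` uniformly on `A`. -/
def LimitedSet {X : Type*} [NormedAddCommGroup X] [NormedSpace ℝ X] (A : Set X) : Prop :=
  Bornology.IsBounded A ∧
    ∀ f : ℕ → X →L[ℝ] ℝ, WeakStarNull f →
      TendstoUniformlyOn (fun n x => f n x) (fun _ => (0 : ℝ)) atTop A

/-- Property (d): for every disjoint weak* null sequence `(f n)`, `(|f n|)` is weak* null. -/
def PropertyD (E : Type*) [NormedAddCommGroup E] [Lattice E] [HasSolidNorm E] [IsOrderedAddMonoid E] [NormedSpace ℝ E] : Prop :=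
  ∀ f : ℕ → E →L[ℝ] ℝ, DualDisjointSeq f → WeakStarNull f → AbsWeakStarNull f

/-- The lattice operations of the dual are weak* sequentially continuous: for every
weak* null sequence `(f n)`, `(|f n|)` is weak* null. -/
def DualLatticeWeakStarSeqCont (E : Type*) [NormedAddCommGroup E] [Lattice E] [HasSolidNorm E] [IsOrderedAddMonoid E]
    [NormedSpace ℝ E] : Prop :=
  ∀ f : ℕ → E →L[ℝ] ℝ, WeakStarNull f → AbsWeakStarNull f

/-- A sequence in a Banach lattice is disjoint if the moduli of distinct terms meet at 0. -/
def LatticeDisjointSeq {E : Type*} [NormedAddCommGroup E] [Lattice E] [HasSolidNorm E] [IsOrderedAddMonoid E] (x : ℕ → E) : Prop :=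
  ∀ m k, m ≠ k → |x m| ⊓ |x k| = 0

/-- A sequence is weakly null if `f (x n) → 0` for every continuous linear functional. -/
def WeaklyNull {E : Type*} [NormedAddCommGroup E] [NormedSpace ℝ E] (x : ℕ → E) : Prop :=
  ∀ f : E →L[ℝ] ℝ, Tendsto (fun n => f (x n)) atTop (𝓝 (0 : ℝ))

/-- A set is solid if `x ∈ A` and `|y| ≤ |x|` imply `y ∈ A`. -/
def IsSolid {E : Type*} [NormedAddCommGroup E] [Lattice E] [HasSolidNorm E] [IsOrderedAddMonoid E] (A : Set E) : Prop :=
  ∀ x ∈ A, ∀ y : E, |y| ≤ |x| → y ∈ A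

/-- The solid hull of a set. -/
def solidHull {E : Type*} [NormedAddCommGroup E] [Lattice E] [HasSolidNorm E] [IsOrderedAddMonoid E] (A : Set E) : Set E :=
  {y | ∃ x ∈ A, |y| ≤ |x|}

/-- A set is almost order bounded if for every `ε > 0` it is contained in
`[-u, u] + ε B_E` for some positive `u`. -/
def AlmostOrderBounded {E : Type*} [NormedAddCommGroup E] [Lattice E] [HasSolidNorm E] [IsOrderedAddMonoid E] (A : Set E) : Prop :=
  ∀ ε : ℝ, 0 < ε → ∃ u : E, 0 ≤ u ∧ A ⊆ Set.Icc (-u) u + Metric.closedBall (0 : E) ε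

/-- σ-Dedekind completeness: every countable nonempty set bounded above has a supremum. -/
def SigmaDedekindComplete (E : Type*) [NormedAddCommGroup E] [Lattice E] [HasSolidNorm E] [IsOrderedAddMonoid E] : Prop :=
  ∀ s : Set E, s.Countable → s.Nonempty → BddAbove s → ∃ b : E, IsLUB s b

/-- A set is relatively weakly compact if its closure in the weak topology is compact. -/
def RelativelyWeaklyCompact {E : Type*} [NormedAddCommGroup E] [NormedSpace ℝ E]
    (A : Set E) : Prop :=
  IsCompact (closure ((toWeakSpace ℝ E) '' A))

/-- The weak Dunford–Pettis* property: every relatively weakly compact set is almost limited. -/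
def WDPStar (E : Type*) [NormedAddCommGroup E] [Lattice E] [HasSolidNorm E] [IsOrderedAddMonoid E] [NormedSpace ℝ E] : Prop :=
  ∀ A : Set E, RelativelyWeaklyCompact A → AlmostLimitedSet A

/-- The bi-sequence property: for each disjoint weakly null sequence in the positive cone
and each weak* null sequence of positive functionals, `f n (x n) → 0`. -/
def BiSequenceProperty (E : Type*) [NormedAddCommGroup E] [Lattice E] [HasSolidNorm E] [IsOrderedAddMonoid E] [NormedSpace ℝ E] : Prop :=
  ∀ x : ℕ → E, (∀ n, 0 ≤ x n) → LatticeDisjointSeq x → WeaklyNull x →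
    ∀ f : ℕ → E →L[ℝ] ℝ, (∀ n, PositiveFunctional (f n)) → WeakStarNull f →
      Tendsto (fun n => f n (x n)) atTop (𝓝 (0 : ℝ))

/-- The dual Schur property: every disjoint weak* null sequence of functionals is norm null. -/
def DualSchur (E : Type*) [NormedAddCommGroup E] [Lattice E] [HasSolidNorm E] [IsOrderedAddMonoid E] [NormedSpace ℝ E] : Prop :=
  ∀ f : ℕ → E →L[ℝ] ℝ, DualDisjointSeq f → WeakStarNull f →
    Tendsto (fun n => ‖f n‖) atTop (𝓝 (0 : ℝ))

/-- The dual positive Schur property: every weak* null sequence of positive functionals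
is norm null. -/
def DualPositiveSchur (E : Type*) [NormedAddCommGroup E] [Lattice E] [HasSolidNorm E] [IsOrderedAddMonoid E] [NormedSpace ℝ E] : Prop :=
  ∀ f : ℕ → E →L[ℝ] ℝ, (∀ n, PositiveFunctional (f n)) → WeakStarNull f →
    Tendsto (fun n => ‖f n‖) atTop (𝓝 (0 : ℝ))

/-- The norm of a Banach lattice is order continuous: every net decreasing to `0`
converges to `0` in norm. -/
def OrderContinuousNorm (E : Type*) [NormedAddCommGroup E] [Lattice E] [HasSolidNorm E] [IsOrderedAddMonoid E] : Prop :=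
  ∀ {ι : Type*} [Preorder ι] [IsDirected ι (· ≤ ·)] [Nonempty ι] (x : ι → E),
    Antitone x → IsGLB (Set.range x) 0 → Tendsto (fun i => ‖x i‖) atTop (𝓝 (0 : ℝ))

/-- The norm of the dual Banach lattice is order continuous: every net of functionals
decreasing to `0` (in the dual order, i.e., pointwise on the positive cone, with greatest
lower bound `0`) converges to `0` in norm. -/
def DualOrderContinuousNorm (E : Type*) [NormedAddCommGroup E] [Lattice E] [HasSolidNorm E] [IsOrderedAddMonoid E]
    [NormedSpace ℝ E] : Prop :=
  ∀ {ι : Type*} [Preorder ι] [IsDirected ι (· ≤ ·)] [Nonempty ι] (f : ι → E →L[ℝ] ℝ),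
    (∀ i j, i ≤ j → ∀ x : E, 0 ≤ x → f j x ≤ f i x) →
    (∀ i, PositiveFunctional (f i)) →
    (∀ g : E →L[ℝ] ℝ, (∀ i, ∀ x : E, 0 ≤ x → g x ≤ f i x) → ∀ x : E, 0 ≤ x → g x ≤ 0) →
    Tendsto (fun i => ‖f i‖) atTop (𝓝 (0 : ℝ))

/-- A norm bounded set `A` is L-weakly compact if every disjoint sequence in its solid
hull is norm null. -/
def LWeaklyCompactSet {E : Type*} [NormedAddCommGroup E] [Lattice E] [HasSolidNorm E] [IsOrderedAddMonoid E] (A : Set E) : Prop :=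
  Bornology.IsBounded A ∧
    ∀ y : ℕ → E, (∀ n, y n ∈ solidHull A) → LatticeDisjointSeq y →
      Tendsto (fun n => ‖y n‖) atTop (𝓝 (0 : ℝ))

/-- An atom of a Banach lattice. -/
def IsLatticeAtom {E : Type*} [NormedAddCommGroup E] [Lattice E] [HasSolidNorm E] [IsOrderedAddMonoid E] (a : E) : Prop :=
  0 < a ∧ ∀ x y : E, 0 ≤ x → x ≤ a → 0 ≤ y → y ≤ a → x ⊓ y = 0 → x = 0 ∨ y = 0

/-- A Banach lattice is discrete (atomic) if the band generated by its atoms is the whole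
lattice; equivalently, the only element disjoint from all atoms is `0`. -/
def DiscreteBanachLattice (E : Type*) [NormedAddCommGroup E] [Lattice E] [HasSolidNorm E] [IsOrderedAddMonoid E] : Prop :=
  ∀ x : E, (∀ a : E, IsLatticeAtom a → |x| ⊓ a = 0) → x = 0

/-- A linear operator between Banach lattices is order bounded if it maps order intervals
into order intervals. -/
def OrderBoundedOperator {E F : Type*} [NormedAddCommGroup E] [Lattice E] [HasSolidNorm E] [IsOrderedAddMonoid E] [NormedSpace ℝ E]
    [NormedAddCommGroup F] [Lattice F] [HasSolidNorm F] [IsOrderedAddMonoid F] [NormedSpace ℝ F] (T : E →ₗ[ℝ] F) : Prop :=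
  ∀ a b : E, ∃ c d : F, T '' Set.Icc a b ⊆ Set.Icc c d

section AuxLattice
variable {E : Type*} [NormedAddCommGroup E] [Lattice E] [HasSolidNorm E] [IsOrderedAddMonoid E]

lemma aux_inf_add_le {u v w : E} (hu : 0 ≤ u) (hv : 0 ≤ v) (hw : 0 ≤ w) :
    u ⊓ (v + w) ≤ u ⊓ v + u ⊓ w := by
  have h1 : u ⊓ (v + w) - w ≤ u ⊓ v :=
    le_inf ((sub_le_sub_right inf_le_left w).trans (by simpa using hw))
      (by simpa using sub_le_sub_right (inf_le_right : u ⊓ (v + w) ≤ v + w) w)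
  have h2 : u ⊓ (v + w) - u ⊓ v ≤ w := sub_le_comm.mp h1
  have h3 : u ⊓ (v + w) - u ⊓ v ≤ u :=
    sub_le_iff_le_add.mpr (inf_le_left.trans (le_add_of_nonneg_right (le_inf hu hv)))
  have := le_inf h3 h2
  calc u ⊓ (v + w) = u ⊓ v + (u ⊓ (v + w) - u ⊓ v) := by abel
  _ ≤ u ⊓ v + u ⊓ w := add_le_add_right this _

lemma aux_inf_nsmul_right {u w : E} (hu : 0 ≤ u) (hw : 0 ≤ w) (h : u ⊓ w = 0) (m : ℕ) :
    u ⊓ (m • w) = 0 := by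
  induction m with
  | zero => simpa using inf_eq_right.mpr hu
  | succ m ih =>
      refine le_antisymm ?_ (le_inf hu (nsmul_nonneg hw _))
      have : u ⊓ ((m • w) + w) ≤ u ⊓ (m • w) + u ⊓ w :=
        aux_inf_add_le hu (nsmul_nonneg hw m) hw
      rw [ih, h, add_zero] at this
      simpa [succ_nsmul] using this

lemma aux_inf_nsmul_nsmul {u w : E} (hu : 0 ≤ u) (hw : 0 ≤ w) (h : u ⊓ w = 0) (m k : ℕ) :
    (m • u) ⊓ (k • w) = 0 := by
  have h1 : u ⊓ (k • w) = 0 := aux_inf_nsmul_right hu hw h k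
  have := aux_inf_nsmul_right (nsmul_nonneg hw k) hu (by rw [inf_comm]; exact h1) m
  rw [inf_comm] at this; exact this

lemma aux_nonneg_of_nsmul_nonneg {v : E} {n : ℕ} (hn : 0 < n) (h : 0 ≤ n • v) : 0 ≤ v := by
  have hd : v⁺ ⊓ v⁻ = 0 := posPart_inf_negPart_eq_zero v
  have h2 : (n • v⁺) ⊓ (n • v⁻) = 0 :=
    aux_inf_nsmul_nsmul (posPart_nonneg v) (negPart_nonneg v) hd n n
  have h3 : n • v⁻ ≤ n • v⁺ := by
    have : n • v = n • v⁺ - n • v⁻ := by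
      rw [← smul_sub]; rw [posPart_sub_negPart]
    rw [this] at h
    exact sub_nonneg.mp h
  have h4 : n • v⁻ = 0 := (inf_eq_right.mpr h3).symm.trans h2
  have h5 : v⁻ ≤ n • v⁻ := by
    obtain ⟨k, rfl⟩ := Nat.exists_eq_succ_of_ne_zero hn.ne'
    calc v⁻ = 0 + v⁻ := (zero_add _).symm
    _ ≤ k • v⁻ + v⁻ := add_le_add_left (nsmul_nonneg (negPart_nonneg v) k) _
    _ = (k + 1) • v⁻ := (succ_nsmul v⁻ k).symm
  have h6 : v⁻ = 0 := le_antisymm (h5.trans_eq h4) (negPart_nonneg v)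
  have := posPart_sub_negPart v
  rw [h6, sub_zero] at this
  rw [← this]; exact posPart_nonneg v

variable [NormedSpace ℝ E]

lemma aux_smul_nonneg {c : ℝ} (hc : 0 ≤ c) {x : E} (hx : 0 ≤ x) : 0 ≤ c • x := by
  have hrat : ∀ q : ℚ, 0 ≤ q → 0 ≤ (q : ℝ) • x := by
    intro q hq
    rcases eq_or_lt_of_le hq with h | h
    · simp [← h]
    have hden : 0 < (q.den : ℕ) := q.den_pos
    apply aux_nonneg_of_nsmul_nonneg hden
    have hnum : (0:ℤ) ≤ q.num := Rat.num_nonneg.mpr hq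
    have hden0 : ((q.den : ℚ)) ≠ 0 := by exact_mod_cast q.den_pos.ne'
    have hq' : ((q.den : ℚ)) * q = (q.num : ℚ) := by
      have := (div_eq_iff hden0).mp (Rat.num_div_den q)
      rw [mul_comm]; exact this.symm
    have : (q.den : ℕ) • ((q : ℝ) • x) = (q.num.toNat : ℕ) • x := by
      rw [← Nat.cast_smul_eq_nsmul ℝ, ← Nat.cast_smul_eq_nsmul ℝ, smul_smul]
      congr 1
      have h2 : ((q.num.toNat : ℕ) : ℝ) = ((q.num : ℤ) : ℝ) := by
        exact_mod_cast congrArg (fun z : ℤ => (z : ℝ)) (Int.toNat_of_nonneg hnum)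
      rw [h2]
      exact_mod_cast congrArg (fun r : ℚ => (r : ℝ)) hq'
    rw [this]
    exact nsmul_nonneg hx _
  -- approximate c from above by rationals
  have hseq : ∀ n : ℕ, ∃ q : ℚ, c < (q : ℝ) ∧ (q : ℝ) < c + 1 / (n + 1) := by
    intro n
    exact_mod_cast exists_rat_btwn (lt_add_of_pos_right c (by positivity : (0:ℝ) < 1 / ((n:ℝ) + 1)))
  choose q hq1 hq2 using hseq
  have htend : Tendsto (fun n => ((q n : ℝ)) • x) atTop (𝓝 (c • x)) := by
    have h1 : Tendsto (fun n => ((q n : ℝ))) atTop (𝓝 c) := by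
      apply tendsto_of_tendsto_of_tendsto_of_le_of_le (g := fun _ => c)
        (h := fun n : ℕ => c + 1 / (n + 1)) tendsto_const_nhds
      · simpa using tendsto_one_div_add_atTop_nhds_zero_nat.const_add c
      · exact fun n => (hq1 n).le
      · exact fun n => (hq2 n).le
    exact h1.smul tendsto_const_nhds
  have hcl : IsClosed {y : E | 0 ≤ y} := isClosed_nonneg
  have hmem : ∀ n, ((q n : ℝ)) • x ∈ {y : E | 0 ≤ y} := by
    intro n
    exact hrat (q n) (by exact_mod_cast ((hq1 n).trans_le' hc).le)
  exact hcl.mem_of_tendsto htend (Eventually.of_forall hmem)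

lemma aux_smul_le_smul {c : ℝ} (hc : 0 ≤ c) {x y : E} (h : x ≤ y) : c • x ≤ c • y := by
  have := aux_smul_nonneg hc (sub_nonneg.mpr h)
  rw [smul_sub] at this
  exact sub_nonneg.mp this

end AuxLattice
section AbsFunctional
variable {E : Type*} [NormedAddCommGroup E] [Lattice E] [HasSolidNorm E] [IsOrderedAddMonoid E] [NormedSpace ℝ E]

lemma aux_riesz_decomp {u a b : E} (ha : 0 ≤ a) (hb : 0 ≤ b) (h : |u| ≤ a + b) :
    ∃ v : E, |v| ≤ a ∧ |u - v| ≤ b := by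
  obtain ⟨h2, hneg⟩ := abs_le'.mp h
  have h1 : -(a + b) ≤ u := neg_le.mp hneg
  refine ⟨(u ⊔ (-a)) ⊓ a, abs_le'.mpr ⟨inf_le_right,
    neg_le.mpr (le_inf le_sup_right (neg_le_self ha))⟩, ?_⟩
  set v := (u ⊔ (-a)) ⊓ a with hv
  have hvu : v ≤ u + b := by
    refine inf_le_left.trans (sup_le (le_add_of_nonneg_right hb) ?_)
    calc (-a : E) = -(a + b) + b := by abel
    _ ≤ u + b := add_le_add_left h1 b
  have huv : u - b ≤ v := by
    refine le_inf (le_sup_left.trans' (by simpa using hb)) ?_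
    rw [sub_le_iff_le_add]; exact h2
  refine abs_le'.mpr ⟨?_, ?_⟩
  · have h4 : b - (u - v) = v - (u - b) := by abel
    exact sub_nonneg.mp (h4 ▸ sub_nonneg.mpr huv)
  · refine neg_le.mpr ?_
    have h4 : (u - v) - (-b) = (u + b) - v := by abel
    exact sub_nonneg.mp (h4 ▸ sub_nonneg.mpr hvu)

lemma absSet_nonempty (f : E →L[ℝ] ℝ) {a : E} (ha : 0 ≤ a) :
    ((fun u => f u) '' {u : E | |u| ≤ a}).Nonempty :=
  ⟨f 0, ⟨0, by simpa using ha, rfl⟩⟩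

lemma absSet_bddAbove (f : E →L[ℝ] ℝ) {a : E} (ha : 0 ≤ a) :
    BddAbove ((fun u => f u) '' {u : E | |u| ≤ a}) := by
  refine ⟨‖f‖ * ‖a‖, ?_⟩
  rintro r ⟨u, hu, rfl⟩
  have h1 : ‖u‖ ≤ ‖a‖ := norm_le_norm_of_abs_le_abs (by rwa [abs_of_nonneg ha])
  calc f u ≤ |f u| := le_abs_self _
  _ = ‖f u‖ := (Real.norm_eq_abs _).symm
  _ ≤ ‖f‖ * ‖u‖ := f.le_opNorm u
  _ ≤ ‖f‖ * ‖a‖ := mul_le_mul_of_nonneg_left h1 (norm_nonneg f)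

lemma le_absFunctional (f : E →L[ℝ] ℝ) {a u : E} (hu : |u| ≤ a) : f u ≤ absFunctional f a :=
  le_csSup (absSet_bddAbove f ((abs_nonneg u).trans hu)) ⟨u, hu, rfl⟩

lemma abs_le_absFunctional (f : E →L[ℝ] ℝ) {a u : E} (hu : |u| ≤ a) :
    |f u| ≤ absFunctional f a := by
  refine abs_le.mpr ⟨?_, le_absFunctional f hu⟩
  have := le_absFunctional f (show |(-u)| ≤ a by rwa [abs_neg])
  rw [map_neg] at this
  linarith

lemma absFunctional_nonneg (f : E →L[ℝ] ℝ) {a : E} (ha : 0 ≤ a) : 0 ≤ absFunctional f a := by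
  have := le_absFunctional f (show |(0 : E)| ≤ a by simpa using ha)
  simpa using this

lemma absFunctional_le (f : E →L[ℝ] ℝ) {a : E} (ha : 0 ≤ a) :
    absFunctional f a ≤ ‖f‖ * ‖a‖ := by
  refine csSup_le (absSet_nonempty f ha) ?_
  rintro r ⟨u, hu, rfl⟩
  have h1 : ‖u‖ ≤ ‖a‖ := norm_le_norm_of_abs_le_abs (by rwa [abs_of_nonneg ha])
  calc f u ≤ |f u| := le_abs_self _
  _ = ‖f u‖ := (Real.norm_eq_abs _).symm
  _ ≤ ‖f‖ * ‖u‖ := f.le_opNorm u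
  _ ≤ ‖f‖ * ‖a‖ := mul_le_mul_of_nonneg_left h1 (norm_nonneg f)

lemma absFunctional_zero (f : E →L[ℝ] ℝ) : absFunctional f 0 = 0 := by
  have hset : {u : E | |u| ≤ 0} = {0} := by
    ext u
    simp only [Set.mem_setOf_eq, Set.mem_singleton_iff]
    constructor
    · intro h
      have h0 : |u| = 0 := le_antisymm h (abs_nonneg u)
      have hu1 : u ≤ 0 := (le_abs_self u).trans h0.le
      have hu2 : -u ≤ 0 := (neg_le_abs u).trans h0.le
      exact le_antisymm hu1 (by simpa using hu2)
    · rintro rfl; simp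
  rw [absFunctional, hset]
  simp

lemma absFunctional_mono (f : E →L[ℝ] ℝ) {a b : E} (ha : 0 ≤ a) (hab : a ≤ b) :
    absFunctional f a ≤ absFunctional f b := by
  refine csSup_le_csSup (absSet_bddAbove f (ha.trans hab)) (absSet_nonempty f ha) ?_
  rintro r ⟨u, hu, rfl⟩
  exact ⟨u, hu.trans hab, rfl⟩

lemma absFunctional_add (f : E →L[ℝ] ℝ) {a b : E} (ha : 0 ≤ a) (hb : 0 ≤ b) :
    absFunctional f (a + b) = absFunctional f a + absFunctional f b := by
  apply le_antisymm
  · refine csSup_le (absSet_nonempty f (add_nonneg ha hb)) ?_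
    rintro r ⟨u, hu, rfl⟩
    show f u ≤ absFunctional f a + absFunctional f b
    obtain ⟨v, hv, hw⟩ := aux_riesz_decomp ha hb hu
    have : f u = f v + f (u - v) := by rw [← map_add]; congr 1; abel
    rw [this]
    exact add_le_add (le_absFunctional f hv) (le_absFunctional f hw)
  · rw [← le_sub_iff_add_le]
    refine csSup_le (absSet_nonempty f ha) ?_
    rintro r ⟨v, hv, rfl⟩
    show f v ≤ absFunctional f (a + b) - absFunctional f b
    rw [le_sub_iff_add_le, add_comm, ← le_sub_iff_add_le]
    refine csSup_le (absSet_nonempty f hb) ?_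
    rintro s ⟨w, hw, rfl⟩
    show f w ≤ absFunctional f (a + b) - f v
    rw [le_sub_iff_add_le, add_comm, ← map_add]
    refine le_absFunctional f ?_
    calc |v + w| ≤ |v| + |w| := abs_add_le v w
    _ ≤ a + b := add_le_add hv hw

end AbsFunctional
section ConeCLM
variable {E : Type*} [NormedAddCommGroup E] [Lattice E] [HasSolidNorm E] [IsOrderedAddMonoid E] [NormedSpace ℝ E]

lemma aux_posPart_le_abs (x : E) : x⁺ ≤ |x| := by
  rw [posPart_def]
  exact sup_le (le_abs_self x) (abs_nonneg x)

lemma aux_negPart_le_abs (x : E) : x⁻ ≤ |x| := by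
  rw [negPart_def]
  exact sup_le (neg_le_abs x) (abs_nonneg x)

lemma aux_norm_posPart_le (x : E) : ‖x⁺‖ ≤ ‖x‖ :=
  norm_le_norm_of_abs_le_abs (by rw [abs_of_nonneg (posPart_nonneg x)]; exact aux_posPart_le_abs x)

lemma aux_norm_negPart_le (x : E) : ‖x⁻‖ ≤ ‖x‖ :=
  norm_le_norm_of_abs_le_abs (by rw [abs_of_nonneg (negPart_nonneg x)]; exact aux_negPart_le_abs x)

lemma cone_p_zero {p : E → ℝ} (hadd : ∀ x y : E, 0 ≤ x → 0 ≤ y → p (x + y) = p x + p y) :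
    p 0 = 0 := by
  have := hadd 0 0 le_rfl le_rfl
  simp only [add_zero] at this
  linarith

lemma cone_q_add {p : E → ℝ} (hadd : ∀ x y : E, 0 ≤ x → 0 ≤ y → p (x + y) = p x + p y)
    (x y : E) :
    p ((x + y)⁺) - p ((x + y)⁻) = (p (x⁺) - p (x⁻)) + (p (y⁺) - p (y⁻)) := by
  have e : (x + y)⁺ + (x⁻ + y⁻) = (x + y)⁻ + (x⁺ + y⁺) := by
    have h : (x + y)⁺ - (x + y)⁻ = (x⁺ - x⁻) + (y⁺ - y⁻) := by
      rw [posPart_sub_negPart, posPart_sub_negPart, posPart_sub_negPart]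
    calc (x + y)⁺ + (x⁻ + y⁻)
        = ((x + y)⁺ - (x + y)⁻) + (x + y)⁻ + x⁻ + y⁻ := by abel
    _ = ((x⁺ - x⁻) + (y⁺ - y⁻)) + (x + y)⁻ + x⁻ + y⁻ := by rw [h]
    _ = (x + y)⁻ + (x⁺ + y⁺) := by abel
  have h1 : p ((x + y)⁺) + (p (x⁻) + p (y⁻)) = p ((x + y)⁻) + (p (x⁺) + p (y⁺)) := by
    rw [← hadd _ _ (negPart_nonneg x) (negPart_nonneg y),
        ← hadd _ _ (posPart_nonneg x) (posPart_nonneg y),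
        ← hadd _ _ (posPart_nonneg (x + y)) (add_nonneg (negPart_nonneg x) (negPart_nonneg y)),
        ← hadd _ _ (negPart_nonneg (x + y)) (add_nonneg (posPart_nonneg x) (posPart_nonneg y)),
        e]
  linarith

noncomputable def coneToCLM (p : E → ℝ) (C : ℝ)
    (hadd : ∀ x y : E, 0 ≤ x → 0 ≤ y → p (x + y) = p x + p y)
    (hC : 0 ≤ C)
    (hbound : ∀ x : E, 0 ≤ x → |p x| ≤ C * ‖x‖) : E →L[ℝ] ℝ :=
  AddMonoidHom.toRealLinearMap
    (AddMonoidHom.mk' (fun x => p (x⁺) - p (x⁻)) (fun x y => cone_q_add hadd x y))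
    (by
      have hq : ∀ z : E, |p (z⁺) - p (z⁻)| ≤ (2 * C) * ‖z‖ := by
        intro z
        calc |p (z⁺) - p (z⁻)| ≤ |p (z⁺)| + |p (z⁻)| := abs_sub _ _
        _ ≤ C * ‖z⁺‖ + C * ‖z⁻‖ :=
            add_le_add (hbound _ (posPart_nonneg z)) (hbound _ (negPart_nonneg z))
        _ ≤ C * ‖z‖ + C * ‖z‖ := add_le_add
            (mul_le_mul_of_nonneg_left (aux_norm_posPart_le z) hC)
            (mul_le_mul_of_nonneg_left (aux_norm_negPart_le z) hC)
        _ = (2 * C) * ‖z‖ := by ring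
      have hlip : LipschitzWith (2 * C).toNNReal (fun x : E => p (x⁺) - p (x⁻)) := by
        apply LipschitzWith.of_dist_le_mul
        intro x y
        have hsub : (p (x⁺) - p (x⁻)) - (p (y⁺) - p (y⁻)) = p ((x - y)⁺) - p ((x - y)⁻) := by
          have := cone_q_add hadd (x - y) y
          simp only [sub_add_cancel] at this
          linarith
        rw [Real.dist_eq, hsub, dist_eq_norm]
        calc |p ((x - y)⁺) - p ((x - y)⁻)| ≤ (2 * C) * ‖x - y‖ := hq _
        _ ≤ ((2 * C).toNNReal : ℝ) * ‖x - y‖ :=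
            mul_le_mul_of_nonneg_right (Real.le_coe_toNNReal _) (norm_nonneg _)
      exact hlip.continuous)

lemma coneToCLM_apply {p : E → ℝ} {C : ℝ}
    (hadd : ∀ x y : E, 0 ≤ x → 0 ≤ y → p (x + y) = p x + p y)
    (hC : 0 ≤ C)
    (hbound : ∀ x : E, 0 ≤ x → |p x| ≤ C * ‖x‖) {x : E} (hx : 0 ≤ x) :
    coneToCLM p C hadd hC hbound x = p x := by
  have : coneToCLM p C hadd hC hbound x = p (x⁺) - p (x⁻) := by
    rw [coneToCLM]
    rfl
  rw [this, posPart_eq_self.mpr hx, negPart_eq_zero.mpr hx, cone_p_zero hadd, sub_zero]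

end ConeCLM
section AbsCLM
variable {E : Type*} [NormedAddCommGroup E] [Lattice E] [HasSolidNorm E] [IsOrderedAddMonoid E] [NormedSpace ℝ E]

noncomputable def absCLM (f : E →L[ℝ] ℝ) : E →L[ℝ] ℝ :=
  coneToCLM (absFunctional f) ‖f‖ (fun _ _ hx hy => absFunctional_add f hx hy) (norm_nonneg f)
    (fun x hx => by
      rw [abs_of_nonneg (absFunctional_nonneg f hx)]
      exact absFunctional_le f hx)

lemma absCLM_apply (f : E →L[ℝ] ℝ) {x : E} (hx : 0 ≤ x) :
    absCLM f x = absFunctional f x := coneToCLM_apply _ _ _ hx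

lemma absCLM_pos (f : E →L[ℝ] ℝ) : PositiveFunctional (absCLM f) := fun x hx => by
  rw [absCLM_apply f hx]; exact absFunctional_nonneg f hx

lemma posFunctional_mono {h : E →L[ℝ] ℝ} (hp : PositiveFunctional h) {x y : E}
    (hxy : x ≤ y) : h x ≤ h y := by
  have := hp (y - x) (sub_nonneg.mpr hxy)
  rw [map_sub] at this
  linarith

lemma abs_apply_le_absCLM (f : E →L[ℝ] ℝ) (x : E) : |f x| ≤ absCLM f |x| := by
  rw [absCLM_apply f (abs_nonneg x)]
  exact abs_le_absFunctional f le_rfl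

lemma absFunctional_of_pos {h : E →L[ℝ] ℝ} (hp : PositiveFunctional h) {z : E} (hz : 0 ≤ z) :
    absFunctional h z = h z := by
  apply le_antisymm
  · refine csSup_le (absSet_nonempty h hz) ?_
    rintro r ⟨u, hu, rfl⟩
    show h u ≤ h z
    have h1 : h u ≤ h |u| := by
      have := hp (|u| - u) (sub_nonneg.mpr (le_abs_self u))
      rw [map_sub] at this
      linarith
    exact h1.trans (posFunctional_mono hp hu)
  · exact le_absFunctional h (abs_of_nonneg hz).le

end AbsCLM

section Comp
variable {E : Type*} [NormedAddCommGroup E] [Lattice E] [HasSolidNorm E] [IsOrderedAddMonoid E] [NormedSpace ℝ E]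

noncomputable def compFun (P : E →L[ℝ] ℝ) (w : E) (a : E) : ℝ := ⨆ m : ℕ, P (a ⊓ m • w)

variable {P : E →L[ℝ] ℝ} {w : E}

lemma compFun_bdd (hP : PositiveFunctional P) {a : E} : BddAbove (Set.range fun m : ℕ => P (a ⊓ m • w)) :=
  ⟨P a, by rintro r ⟨m, rfl⟩; exact posFunctional_mono hP inf_le_left⟩

lemma le_compFun (hP : PositiveFunctional P) (a : E) (m : ℕ) : P (a ⊓ m • w) ≤ compFun P w a :=
  le_ciSup (compFun_bdd hP) m

lemma compFun_le (hP : PositiveFunctional P) (a : E) : compFun P w a ≤ P a :=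
  ciSup_le fun _ => posFunctional_mono hP inf_le_left

lemma compFun_nonneg (hP : PositiveFunctional P) {a : E} (ha : 0 ≤ a) : 0 ≤ compFun P w a := by
  have h0 : a ⊓ (0 : ℕ) • w = 0 := by
    rw [zero_smul]
    exact inf_eq_right.mpr ha
  have := le_compFun hP (w := w) a 0
  rw [h0, map_zero] at this
  exact this

lemma compFun_add (hP : PositiveFunctional P) (hw : 0 ≤ w) {a b : E} (ha : 0 ≤ a) (hb : 0 ≤ b) :
    compFun P w (a + b) = compFun P w a + compFun P w b := by
  apply le_antisymm
  · refine ciSup_le fun m => ?_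
    have hsub : (a + b) ⊓ (m • w) ≤ a ⊓ (m • w) + b ⊓ (m • w) := by
      have := aux_inf_add_le (nsmul_nonneg hw m) ha hb
      rw [inf_comm, inf_comm (m • w) a, inf_comm (m • w) b] at this
      exact this
    calc P ((a + b) ⊓ (m • w)) ≤ P (a ⊓ (m • w) + b ⊓ (m • w)) := posFunctional_mono hP hsub
    _ = P (a ⊓ (m • w)) + P (b ⊓ (m • w)) := map_add P _ _
    _ ≤ compFun P w a + compFun P w b :=
        add_le_add (le_compFun hP a m) (le_compFun hP b m)
  · rw [← le_sub_iff_add_le]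
    refine ciSup_le fun m => ?_
    rw [le_sub_iff_add_le, add_comm, ← le_sub_iff_add_le]
    refine ciSup_le fun k => ?_
    rw [le_sub_iff_add_le]
    have hsup : a ⊓ (m • w) + b ⊓ (k • w) ≤ (a + b) ⊓ ((m + k) • w) := by
      refine le_inf (add_le_add inf_le_left inf_le_left) ?_
      rw [add_nsmul]
      exact add_le_add inf_le_right inf_le_right
    calc P (b ⊓ (k • w)) + P (a ⊓ (m • w))
        = P (a ⊓ (m • w) + b ⊓ (k • w)) := by rw [map_add]; ring
    _ ≤ P ((a + b) ⊓ ((m + k) • w)) := posFunctional_mono hP hsup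
    _ ≤ compFun P w (a + b) := le_compFun hP _ _

lemma compFun_bound (hP : PositiveFunctional P) {a : E} (ha : 0 ≤ a) : |compFun P w a| ≤ ‖P‖ * ‖a‖ := by
  rw [abs_of_nonneg (compFun_nonneg hP ha)]
  calc compFun P w a ≤ P a := compFun_le hP a
  _ ≤ |P a| := le_abs_self _
  _ = ‖P a‖ := (Real.norm_eq_abs _).symm
  _ ≤ ‖P‖ * ‖a‖ := P.le_opNorm a

noncomputable def compCLM (P : E →L[ℝ] ℝ) (hP : PositiveFunctional P) (w : E) (hw : 0 ≤ w) :
    E →L[ℝ] ℝ :=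
  coneToCLM (compFun P w) ‖P‖ (fun _ _ hx hy => compFun_add hP hw hx hy) (norm_nonneg P)
    (fun _ hx => compFun_bound hP hx)

lemma compCLM_apply (hP : PositiveFunctional P) (hw : 0 ≤ w) {x : E} (hx : 0 ≤ x) : compCLM P hP w hw x = compFun P w x :=
  coneToCLM_apply _ _ _ hx

lemma compCLM_pos (hP : PositiveFunctional P) (hw : 0 ≤ w) : PositiveFunctional (compCLM P hP w hw) := fun x hx => by
  rw [compCLM_apply hP hw hx]; exact compFun_nonneg hP hx

lemma compCLM_le (hP : PositiveFunctional P) (hw : 0 ≤ w) {x : E} (hx : 0 ≤ x) : compCLM P hP w hw x ≤ P x := by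
  rw [compCLM_apply hP hw hx]; exact compFun_le hP x

lemma compCLM_ge_single (hP : PositiveFunctional P) (hw : 0 ≤ w) {x : E} (hx : 0 ≤ x) : P (x ⊓ w) ≤ compCLM P hP w hw x := by
  rw [compCLM_apply hP hw hx]
  have := le_compFun hP (w := w) x 1
  rwa [one_smul] at this

end Comp
section CompDisjoint
variable {E : Type*} [NormedAddCommGroup E] [Lattice E] [HasSolidNorm E] [IsOrderedAddMonoid E] [NormedSpace ℝ E]

lemma compFun_def (P : E →L[ℝ] ℝ) (w a : E) : compFun P w a = ⨆ m : ℕ, P (a ⊓ m • w) := rfl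

lemma compCLM_dualDisjoint {P P' : E →L[ℝ] ℝ} (hP : PositiveFunctional P)
    (hP' : PositiveFunctional P') {w w' : E} (hw : 0 ≤ w) (hw' : 0 ≤ w')
    (hdisj : w ⊓ w' = 0) :
    DualDisjoint (compCLM P hP w hw) (compCLM P' hP' w' hw') := by
  intro x hx ε hε
  set g := compCLM P hP w hw with hg
  set g' := compCLM P' hP' w' hw' with hg'
  obtain ⟨m, hm⟩ : ∃ m : ℕ, g x - ε / 2 < P (x ⊓ m • w) := by
    have h1 : g x - ε / 2 < compFun P w x := by
      rw [← compCLM_apply hP hw hx]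
      linarith
    rw [compFun_def] at h1
    exact exists_lt_of_lt_ciSup h1
  have hxmw : (0 : E) ≤ x ⊓ (m • w) := le_inf hx (nsmul_nonneg hw m)
  have hy : (0 : E) ≤ x - x ⊓ (m • w) := sub_nonneg.mpr inf_le_left
  refine ⟨x - x ⊓ (m • w), hy, sub_le_self _ hxmw, ?_⟩
  have habs1 : absFunctional g (x - x ⊓ (m • w)) = g (x - x ⊓ (m • w)) :=
    absFunctional_of_pos (compCLM_pos hP hw) hy
  have hsimp : x - (x - x ⊓ (m • w)) = x ⊓ (m • w) := sub_sub_cancel _ _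
  have habs2 : absFunctional g' (x - (x - x ⊓ (m • w))) = g' (x ⊓ (m • w)) := by
    rw [hsimp]
    exact absFunctional_of_pos (compCLM_pos hP' hw') hxmw
  have hgm : P (x ⊓ m • w) ≤ g (x ⊓ m • w) := by
    rw [hg, compCLM_apply hP hw hxmw]
    have h2 := le_compFun hP (w := w) (x ⊓ m • w) m
    rwa [inf_assoc, inf_idem] at h2
  have hgy : g (x - x ⊓ (m • w)) < ε / 2 := by
    rw [map_sub]
    linarith
  have hzero : g' (x ⊓ (m • w)) = 0 := by
    rw [hg', compCLM_apply hP' hw' hxmw, compFun_def]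
    have hterm : ∀ k : ℕ, (x ⊓ m • w) ⊓ (k • w') = 0 := by
      intro k
      refine le_antisymm ?_ (le_inf hxmw (nsmul_nonneg hw' k))
      calc (x ⊓ m • w) ⊓ (k • w') ≤ (m • w) ⊓ (k • w') :=
            inf_le_inf_right _ inf_le_right
      _ = 0 := aux_inf_nsmul_nsmul hw hw' hdisj m k
    simp only [hterm, map_zero]
    exact ciSup_const
  rw [habs1, habs2, hzero, add_zero]
  linarith

end CompDisjoint

section Disjointify
variable {E : Type*} [NormedAddCommGroup E] [Lattice E] [HasSolidNorm E] [IsOrderedAddMonoid E] [NormedSpace ℝ E]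

lemma aux_coef_le {n m : ℕ} (hnm : n < m) : (2 : ℝ) ^ (m + 1) - 4 ^ m * (1 / 2) ^ n ≤ 0 := by
  have h2n : (0 : ℝ) < 2 ^ n := by positivity
  have h4 : (4 : ℝ) ^ m * (1 / 2) ^ n = 2 ^ (2 * m) / 2 ^ n := by
    rw [show (4 : ℝ) = 2 ^ 2 by norm_num, ← pow_mul, one_div, inv_pow, div_eq_mul_inv]
  rw [h4, sub_nonpos, le_div_iff₀ h2n, ← pow_add]
  exact pow_le_pow_right₀ (by norm_num) (by omega)

lemma aux_posPart_inf_posPart_le (a b : E) : a⁺ ⊓ b⁺ ≤ (a ⊓ b)⁺ := by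
  set d := a ⊓ b with hd
  have hsub : ∀ x : E, d ≤ x → x⁺ ≤ d⁺ + (x - d) := by
    intro x hdx
    have h1 : x ≤ d⁺ + (x - d) := by
      calc x = d + (x - d) := by abel
      _ ≤ d⁺ + (x - d) := add_le_add_left (le_posPart d) _
    rw [posPart_def]
    exact sup_le h1 (add_nonneg (posPart_nonneg d) (sub_nonneg.mpr hdx))
  have h2 : ((-d) + a) ⊓ ((-d) + b) = (-d) + (a ⊓ b) := (add_inf _ _ _).symm
  calc a⁺ ⊓ b⁺ ≤ (d⁺ + (a - d)) ⊓ (d⁺ + (b - d)) :=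
        inf_le_inf (hsub a inf_le_left) (hsub b inf_le_right)
  _ = d⁺ + ((a - d) ⊓ (b - d)) := (add_inf _ _ _).symm
  _ = d⁺ := by
      rw [sub_eq_neg_add, sub_eq_neg_add, add_comm (-d) a, add_comm (-d) b]
      rw [show (a + -d) ⊓ (b + -d) = (a ⊓ b) + -d from ?_]
      · rw [← hd]; simp
      · rw [add_comm a (-d), add_comm b (-d), add_comm (a ⊓ b) (-d)]
        exact (add_inf _ _ _).symm

lemma aux_disjointify {u : ℕ → E} {X : E} (hu : ∀ k, 0 ≤ u k) (hX : 0 ≤ X)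
    (hXu : ∀ k, u k ≤ (2 ^ k : ℝ) • X) {n m : ℕ} (hnm : n < m) :
    ((u (n + 1) - (4 ^ n : ℝ) • (∑ i ∈ Finset.range (n + 1), u i) - ((1 / 2) ^ n : ℝ) • X)⁺)
      ⊓ ((u (m + 1) - (4 ^ m : ℝ) • (∑ i ∈ Finset.range (m + 1), u i)
          - ((1 / 2) ^ m : ℝ) • X)⁺) = 0 := by
  set Sn := ∑ i ∈ Finset.range (n + 1), u i with hSn
  set Sm := ∑ i ∈ Finset.range (m + 1), u i with hSm
  have hSn0 : (0 : E) ≤ Sn := Finset.sum_nonneg fun i _ => hu i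
  have hSmu : u (n + 1) ≤ Sm :=
    Finset.single_le_sum (fun i _ => hu i) (Finset.mem_range.mpr (by omega))
  set a := u (n + 1) - ((1 / 2) ^ n : ℝ) • X with ha
  set b := ((2 : ℝ) ^ (m + 1)) • X - ((4 : ℝ) ^ m) • u (n + 1) with hb
  have hyn : u (n + 1) - (4 ^ n : ℝ) • Sn - ((1 / 2) ^ n : ℝ) • X ≤ a := by
    rw [ha]
    refine sub_le_sub_right (sub_le_self _ ?_) _
    exact aux_smul_nonneg (by positivity) hSn0
  have hym : u (m + 1) - (4 ^ m : ℝ) • Sm - ((1 / 2) ^ m : ℝ) • X ≤ b := by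
    rw [hb]
    have h1 : u (m + 1) - (4 ^ m : ℝ) • Sm ≤ ((2 : ℝ) ^ (m + 1)) • X - ((4 : ℝ) ^ m) • u (n + 1) :=
      sub_le_sub (hXu (m + 1)) (aux_smul_le_smul (by positivity) hSmu)
    exact (sub_le_self _ (aux_smul_nonneg (by positivity) hX)).trans h1
  have hab : a ⊓ b ≤ 0 := by
    have hcomb : ((4 : ℝ) ^ m) • (a ⊓ b) + (a ⊓ b) ≤ ((4 : ℝ) ^ m) • a + b :=
      add_le_add (aux_smul_le_smul (by positivity) inf_le_left) inf_le_right
    have hval : ((4 : ℝ) ^ m) • a + b = ((2 : ℝ) ^ (m + 1) - 4 ^ m * (1 / 2) ^ n) • X := by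
      rw [ha, hb]
      module
    have hXneg : ((2 : ℝ) ^ (m + 1) - 4 ^ m * (1 / 2) ^ n) • X ≤ 0 := by
      have h0 := aux_smul_nonneg (neg_nonneg.mpr (aux_coef_le hnm)) hX
      rw [neg_smul] at h0
      exact neg_nonneg.mp h0
    have hsum : ((4 : ℝ) ^ m + 1) • (a ⊓ b) ≤ 0 := by
      rw [add_smul, one_smul]
      exact hcomb.trans (hval ▸ hXneg)
    have hpos : (0 : ℝ) < (4 : ℝ) ^ m + 1 := by positivity
    have hfin := aux_smul_le_smul (le_of_lt (inv_pos.mpr hpos)) hsum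
    rwa [smul_smul, inv_mul_cancel₀ hpos.ne', one_smul, smul_zero] at hfin
  refine le_antisymm ?_ (le_inf (posPart_nonneg _) (posPart_nonneg _))
  calc ((u (n + 1) - (4 ^ n : ℝ) • Sn - ((1 / 2) ^ n : ℝ) • X)⁺)
        ⊓ ((u (m + 1) - (4 ^ m : ℝ) • Sm - ((1 / 2) ^ m : ℝ) • X)⁺)
      ≤ a⁺ ⊓ b⁺ := inf_le_inf (posPart_mono hyn) (posPart_mono hym)
  _ ≤ (a ⊓ b)⁺ := aux_posPart_inf_posPart_le a b
  _ = 0 := posPart_eq_zero.mpr hab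

end Disjointify
/-- If the lattice operations of `E*` are weak* sequentially continuous,
then every almost limited solid subset of `E` is limited. -/
theorem statement7 {E : Type*} [NormedAddCommGroup E] [Lattice E] [HasSolidNorm E] [IsOrderedAddMonoid E] [NormedSpace ℝ E]
    [CompleteSpace E] (hE : DualLatticeWeakStarSeqCont E) :
    ∀ A : Set E, IsSolid A → AlmostLimitedSet A → LimitedSet A := by
  classical
  intro A hsolid hAL
  obtain ⟨hbdd, halm⟩ := hAL
  refine ⟨hbdd, ?_⟩
  intro f hf
  by_contra hcon
  rw [Metric.tendstoUniformlyOn_iff] at hcon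
  push_neg at hcon
  obtain ⟨ε, hε, hfreq⟩ := hcon
  have hfreq' : ∃ᶠ n in atTop, ∃ x ∈ A, ε ≤ dist 0 (f n x) := by
    refine hfreq.mono ?_
    intro n hn
    exact hn
  obtain ⟨m, hm_mono, hm⟩ := Filter.extraction_of_frequently_atTop hfreq'
  choose x hxA hxval using hm
  set P : ℕ → E →L[ℝ] ℝ := fun n => absCLM (f n) with hP
  set a : ℕ → E := fun k => |x k| with ha
  have haA : ∀ k, a k ∈ A := fun k => hsolid (x k) (hxA k) (|x k|) (by rw [abs_abs])
  have ha0 : ∀ k, 0 ≤ a k := fun k => abs_nonneg _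
  have hPa : ∀ k, ε ≤ P (m k) (a k) := by
    intro k
    have h1 : ε ≤ |f (m k) (x k)| := by
      have := hxval k
      rwa [Real.dist_eq, zero_sub, abs_neg] at this
    exact h1.trans (abs_apply_le_absCLM (f (m k)) (x k))
  have hconv : ∀ v : E, 0 ≤ v → Tendsto (fun n => P (m n) v) atTop (𝓝 0) := by
    intro v hv
    have h1 : Tendsto (fun n => absFunctional (f n) v) atTop (𝓝 0) := hE f hf v hv
    have h2 : Tendsto (fun n => absFunctional (f (m n)) v) atTop (𝓝 0) :=
      h1.comp hm_mono.tendsto_atTop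
    refine h2.congr fun n => ?_
    rw [hP, absCLM_apply _ hv]
  obtain ⟨M, hM⟩ := isBounded_iff_forall_norm_le.mp hbdd
  -- recursive subsequence construction
  have hstep : ∀ (j p : ℕ) (s : E), ∃ n, p < n ∧ (0 ≤ s → P (m n) s ≤ ε / 4 * (1 / 4) ^ j) := by
    intro j p s
    by_cases hs : 0 ≤ s
    · have h1 : ∀ᶠ n in atTop, P (m n) s < ε / 4 * (1 / 4) ^ j :=
        (hconv s hs).eventually_lt_const (by positivity)
      obtain ⟨n, hn1, hn2⟩ := (h1.and (eventually_gt_atTop p)).exists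
      exact ⟨n, hn2, fun _ => hn1.le⟩
    · exact ⟨p + 1, Nat.lt_succ_self p, fun hs' => absurd hs' hs⟩
  choose nxt hlt hband using hstep
  let F : ℕ → ℕ × E → ℕ × E := fun j st =>
    (nxt j st.1 st.2, st.2 + a (nxt j st.1 st.2))
  let ψ : ℕ → ℕ × E := fun j => Nat.rec ((0 : ℕ), a 0) F j
  have hψ1 : ∀ j, (ψ (j + 1)).1 = nxt j (ψ j).1 (ψ j).2 := fun j => rfl
  have hψ2 : ∀ j, (ψ (j + 1)).2 = (ψ j).2 + a ((ψ (j + 1)).1) := fun j => rfl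
  set φ : ℕ → ℕ := fun j => (ψ j).1 with hφ
  have hsum : ∀ j, (ψ j).2 = ∑ i ∈ Finset.range (j + 1), a (φ i) := by
    intro j
    induction j with
    | zero => simp [ψ, φ]
    | succ j ih =>
        rw [hψ2 j, ih, Finset.sum_range_succ (fun i => a (φ i)) (j + 1)]
  have hs2 : ∀ j, 0 ≤ (ψ j).2 := by
    intro j
    rw [hsum j]
    exact Finset.sum_nonneg fun i _ => ha0 _
  have hφmono : StrictMono φ := by
    apply strictMono_nat_of_lt_succ
    intro j
    show (ψ j).1 < (ψ (j + 1)).1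
    rw [hψ1 j]
    exact hlt j (ψ j).1 (ψ j).2
  have hrec : ∀ j : ℕ, P (m (φ (j + 1))) (∑ i ∈ Finset.range (j + 1), a (φ i))
      ≤ ε / 4 * (1 / 4) ^ j := by
    intro j
    rw [← hsum j]
    have := hband j (ψ j).1 (ψ j).2 (hs2 j)
    rwa [← hψ1 j] at this
  -- the subsequence
  set u : ℕ → E := fun j => a (φ j) with hu_def
  have hu0 : ∀ j, 0 ≤ u j := fun j => ha0 _
  have huA : ∀ j, u j ∈ A := fun j => haA _
  -- the dominating element X
  have hsummable : Summable (fun k : ℕ => ((1 / 2 : ℝ) ^ k) • u k) := by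
    have hgeo : Summable (fun k : ℕ => (1 / 2 : ℝ) ^ k * M) :=
      (summable_geometric_of_lt_one (by norm_num) (by norm_num)).mul_right M
    refine Summable.of_norm (hgeo.of_nonneg_of_le (fun k => norm_nonneg _) (fun k => ?_))
    rw [norm_smul, Real.norm_eq_abs, abs_pow]
    have : |(1 / 2 : ℝ)| = 1 / 2 := by norm_num
    rw [this]
    exact mul_le_mul_of_nonneg_left (hM _ (huA k)) (by positivity)
  set X : E := ∑' k, ((1 / 2 : ℝ) ^ k) • u k with hX_def
  have hX0 : 0 ≤ X :=
    tsum_nonneg fun k => aux_smul_nonneg (by positivity) (hu0 k)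
  have hXu : ∀ k, u k ≤ (2 ^ k : ℝ) • X := by
    intro k
    have h1 : ((1 / 2 : ℝ) ^ k) • u k ≤ X :=
      Summable.le_tsum hsummable k fun j _ => aux_smul_nonneg (by positivity) (hu0 j)
    have h2 := aux_smul_le_smul (by positivity : (0 : ℝ) ≤ (2 : ℝ) ^ k) h1
    rwa [smul_smul, ← mul_pow, (by norm_num : (2 : ℝ) * (1 / 2) = 1), one_pow, one_smul] at h2
  -- the disjoint vectors
  set y : ℕ → E := fun j =>
    (u (j + 1) - (4 ^ j : ℝ) • (∑ i ∈ Finset.range (j + 1), u i) - ((1 / 2) ^ j : ℝ) • X)⁺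
    with hy_def
  have hy0 : ∀ j, 0 ≤ y j := fun j => posPart_nonneg _
  have hydisj : ∀ i j, i ≠ j → y i ⊓ y j = 0 := by
    intro i j hij
    rcases lt_or_gt_of_ne hij with h | h
    · exact aux_disjointify hu0 hX0 hXu h
    · rw [inf_comm]
      exact aux_disjointify hu0 hX0 hXu h
  -- the disjoint functionals
  set Q : ℕ → E →L[ℝ] ℝ := fun j => P (m (φ (j + 1))) with hQ_def
  have hQpos : ∀ j, PositiveFunctional (Q j) := fun j => absCLM_pos _
  set g : ℕ → E →L[ℝ] ℝ := fun j => compCLM (Q j) (hQpos j) (y j) (hy0 j) with hg_def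
  have hgdisj : DualDisjointSeq g := fun i j hij =>
    compCLM_dualDisjoint (hQpos i) (hQpos j) (hy0 i) (hy0 j) (hydisj i j hij)
  have hQtend : ∀ v : E, 0 ≤ v → Tendsto (fun j => Q j v) atTop (𝓝 0) := by
    intro v hv
    have hsucc : StrictMono fun j : ℕ => j + 1 := fun a b h => Nat.add_lt_add_right h 1
    have hmono : StrictMono fun j : ℕ => φ (j + 1) := fun a b h => hφmono (hsucc h)
    exact (hconv v hv).comp hmono.tendsto_atTop
  have hgnull : WeakStarNull g := by
    intro z
    have hb : ∀ j, ‖g j z‖ ≤ Q j |z| := by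
      intro j
      have hz : z = z⁺ - z⁻ := (posPart_sub_negPart z).symm
      have h1 : g j z = g j (z⁺) - g j (z⁻) := by rw [← map_sub, ← hz]
      have h2 : 0 ≤ g j (z⁺) := compCLM_pos (hQpos j) (hy0 j) _ (posPart_nonneg z)
      have h3 : 0 ≤ g j (z⁻) := compCLM_pos (hQpos j) (hy0 j) _ (negPart_nonneg z)
      have h4 : g j (z⁺) ≤ Q j (z⁺) := compCLM_le (hQpos j) (hy0 j) (posPart_nonneg z)
      have h5 : g j (z⁻) ≤ Q j (z⁻) := compCLM_le (hQpos j) (hy0 j) (negPart_nonneg z)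
      have h6 : Q j (z⁺) + Q j (z⁻) = Q j |z| := by
        rw [← map_add]
        congr 1
        exact posPart_add_negPart z
      rw [Real.norm_eq_abs, h1]
      calc |g j (z⁺) - g j (z⁻)| ≤ |g j (z⁺)| + |g j (z⁻)| := abs_sub _ _
      _ = g j (z⁺) + g j (z⁻) := by rw [abs_of_nonneg h2, abs_of_nonneg h3]
      _ ≤ Q j (z⁺) + Q j (z⁻) := add_le_add h4 h5
      _ = Q j |z| := h6
    exact squeeze_zero_norm hb (hQtend |z| (abs_nonneg z))
  -- eventual lower bound for g j (u (j+1))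
  have hQX : ∀ᶠ j in atTop, Q j X < ε / 8 :=
    (hQtend X hX0).eventually_lt_const (by positivity)
  have hlow : ∀ᶠ j in atTop, ε / 2 < g j (u (j + 1)) := by
    refine hQX.mono fun j hj => ?_
    have h1 : Q j (u (j + 1) ⊓ y j) ≤ g j (u (j + 1)) :=
      compCLM_ge_single (hQpos j) (hy0 j) (hu0 (j + 1))
    set S : E := ∑ i ∈ Finset.range (j + 1), u i with hS
    set v : E := (4 ^ j : ℝ) • S + ((1 / 2) ^ j : ℝ) • X with hv
    have hv0 : (0 : E) ≤ v :=
      add_nonneg (aux_smul_nonneg (by positivity) (Finset.sum_nonneg fun i _ => hu0 i))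
        (aux_smul_nonneg (by positivity) hX0)
    have h2 : u (j + 1) - v ≤ u (j + 1) ⊓ y j := by
      refine le_inf (sub_le_self _ hv0) ?_
      have hyj : y j = (u (j + 1) - (4 ^ j : ℝ) • S - ((1 / 2) ^ j : ℝ) • X)⁺ := rfl
      rw [hyj, show u (j + 1) - (4 ^ j : ℝ) • S - ((1 / 2) ^ j : ℝ) • X = u (j + 1) - v from
        by rw [hv]; abel]
      exact le_posPart _
    have h5 : Q j (u (j + 1)) - Q j v ≤ Q j (u (j + 1) ⊓ y j) := by
      have h5' := posFunctional_mono (hQpos j) h2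
      rwa [map_sub] at h5'
    have h6 : Q j v = (4 ^ j : ℝ) * Q j S + (1 / 2 : ℝ) ^ j * Q j X := by
      rw [hv, map_add, map_smul, map_smul, smul_eq_mul, smul_eq_mul]
    have h8 : Q j S = P (m (φ (j + 1))) (∑ i ∈ Finset.range (j + 1), a (φ i)) := rfl
    have h7 : (4 ^ j : ℝ) * Q j S ≤ ε / 4 := by
      calc (4 ^ j : ℝ) * Q j S ≤ (4 ^ j : ℝ) * (ε / 4 * (1 / 4) ^ j) := by
            refine mul_le_mul_of_nonneg_left ?_ (by positivity)
            rw [h8]; exact hrec j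
      _ = ε / 4 * (4 * (1 / 4)) ^ j := by rw [mul_pow]; ring
      _ = ε / 4 := by norm_num
    have h9 : (1 / 2 : ℝ) ^ j * Q j X ≤ ε / 8 := by
      have hQX0 : 0 ≤ Q j X := hQpos j X hX0
      calc (1 / 2 : ℝ) ^ j * Q j X ≤ 1 * Q j X :=
            mul_le_mul_of_nonneg_right (pow_le_one₀ (by norm_num) (by norm_num)) hQX0
      _ = Q j X := one_mul _
      _ ≤ ε / 8 := hj.le
    have h10 : ε ≤ Q j (u (j + 1)) := hPa (φ (j + 1))
    linarith
  -- contradiction with almost limitedness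
  have huni := halm g hgdisj hgnull
  rw [Metric.tendstoUniformlyOn_iff] at huni
  have h11 := huni (ε / 2) (by positivity)
  obtain ⟨j, hj1, hj2⟩ := (h11.and hlow).exists
  have h12 := hj1 (u (j + 1)) (huA (j + 1))
  rw [Real.dist_eq, zero_sub, abs_neg] at h12
  have h13 : g j (u (j + 1)) ≤ |g j (u (j + 1))| := le_abs_self _
  linarith
end

section
/- Let E be a Banach lattice that has the property (d). If every almost limited solid subset of E is limited, then the lattice operations of E* are weak* sequentially continuous. -/
open Filter Topology Metric Pointwise

section Aux

variable {E : Type*} [NormedAddCommGroup E] [Lattice E] [HasSolidNorm E] [IsOrderedAddMonoid E] [NormedSpace ℝ E]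

lemma aux_mem_zero (f : E →L[ℝ] ℝ) {x : E} (hx : 0 ≤ x) :
    ((fun u => f u) '' {u : E | |u| ≤ x}).Nonempty :=
  ⟨f 0, ⟨0, by simpa using hx, rfl⟩⟩

lemma aux_bddAbove (f : E →L[ℝ] ℝ) {x : E} (hx : 0 ≤ x) :
    BddAbove ((fun u => f u) '' {u : E | |u| ≤ x}) := by
  refine ⟨‖f‖ * ‖x‖, ?_⟩
  rintro _ ⟨u, hu, rfl⟩
  have hu' : |u| ≤ x := hu
  have hnorm : ‖u‖ ≤ ‖x‖ := norm_le_norm_of_abs_le_abs (hu'.trans (le_abs_self x))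
  calc f u ≤ |f u| := le_abs_self _
    _ ≤ ‖f‖ * ‖u‖ := f.le_opNorm u
    _ ≤ ‖f‖ * ‖x‖ := by gcongr

lemma aux_absFunctional_nonneg (f : E →L[ℝ] ℝ) {x : E} (hx : 0 ≤ x) :
    0 ≤ absFunctional f x := by
  have h0 : (0 : ℝ) ∈ (fun u => f u) '' {u : E | |u| ≤ x} :=
    ⟨0, by simpa using hx, by simp⟩
  exact le_csSup (aux_bddAbove f hx) h0

lemma aux_abs_apply_le (f : E →L[ℝ] ℝ) {x y : E} (hx : 0 ≤ x) (hy : |y| ≤ x) :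
    |f y| ≤ absFunctional f x := by
  rw [abs_le]
  constructor
  · have h1 : f (-y) ≤ absFunctional f x :=
      le_csSup (aux_bddAbove f hx) ⟨-y, by simpa using hy, rfl⟩
    rw [map_neg] at h1
    linarith
  · exact le_csSup (aux_bddAbove f hx) ⟨y, hy, rfl⟩

lemma aux_absFunctional_le (f : E →L[ℝ] ℝ) {x : E} (hx : 0 ≤ x) {c : ℝ}
    (hc : ∀ y : E, |y| ≤ x → f y ≤ c) : absFunctional f x ≤ c := by
  refine csSup_le (aux_mem_zero f hx) ?_
  rintro _ ⟨u, hu, rfl⟩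
  exact hc u hu

end Aux

/-- If `E` has property (d) and every almost limited solid subset of `E` is
limited, then the lattice operations of `E*` are weak* sequentially continuous. -/
theorem statement8 {E : Type*} [NormedAddCommGroup E] [Lattice E] [HasSolidNorm E] [IsOrderedAddMonoid E] [NormedSpace ℝ E]
    [CompleteSpace E] (hd : PropertyD E)
    (h : ∀ A : Set E, IsSolid A → AlmostLimitedSet A → LimitedSet A) :
    DualLatticeWeakStarSeqCont E := by
  intro f hf x hx
  set A : Set E := {y | |y| ≤ x} with hA
  have hsolid : IsSolid A := by
    intro a ha y hy
    exact le_trans hy ha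
  have hbdd : Bornology.IsBounded A := by
    refine (Metric.isBounded_iff_subset_closedBall 0).2 ⟨‖x‖, ?_⟩
    intro y hy
    simp only [Metric.mem_closedBall, dist_zero_right]
    have : |y| ≤ |x| := by rwa [abs_of_nonneg hx]
    exact norm_le_norm_of_abs_le_abs this
  have halm : AlmostLimitedSet A := by
    refine ⟨hbdd, ?_⟩
    intro g hgd hgn
    have habs : Tendsto (fun n => absFunctional (g n) x) atTop (𝓝 (0 : ℝ)) :=
      hd g hgd hgn x hx
    rw [Metric.tendstoUniformlyOn_iff]
    intro ε hε
    filter_upwards [(NormedAddCommGroup.tendsto_nhds_zero.1 habs) ε hε] with n hn y hy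
    rw [Real.norm_eq_abs] at hn
    rw [dist_comm, Real.dist_eq, sub_zero]
    calc |g n y| ≤ absFunctional (g n) x := aux_abs_apply_le (g n) hx hy
      _ ≤ |absFunctional (g n) x| := le_abs_self _
      _ < ε := hn
  have hlim : LimitedSet A := h A hsolid halm
  have huni := hlim.2 f hf
  rw [Metric.tendstoUniformlyOn_iff] at huni
  rw [NormedAddCommGroup.tendsto_nhds_zero]
  intro ε hε
  filter_upwards [huni (ε / 2) (by linarith)] with n hn
  have hle : absFunctional (f n) x ≤ ε / 2 := by
    refine aux_absFunctional_le (f n) hx ?_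
    intro y hy
    have h2 := hn y hy
    rw [dist_comm, Real.dist_eq, sub_zero] at h2
    exact le_trans (le_abs_self _) h2.le
  have hge : 0 ≤ absFunctional (f n) x := aux_absFunctional_nonneg (f n) hx
  rw [Real.norm_eq_abs, abs_of_nonneg hge]
  linarith
end
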